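/- (Rockafellar–Uryasev representation of Expected Shortfall.) Let p ∈ (0,1) and F ∈ F_1^+, and for z ∈ ℝ set m_F(z) = (1 − p) z + ∫_z^∞ (1 − F(x)) dx = (1 − p) z + E((X − z)_+) for X ~ F. Then ∫_p^1 F^{-1}(u) du = min_{y ∈ ℝ} m_F(y), and the quantile y = F^{-1}(p) attains this minimum. -/

import Mathlib

open MeasureTheory ProbabilityTheory Filter Set

/-- The cumulative distribution function of a probability measure `μ` on `ℝ`. -/
noncomputable def cdfOf (μ : Measure ℝ) : ℝ → ℝ := fun x => (μ (Iic x)).toReal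

/-- The quantile function of a cdf `F`: `F⁻¹(p) = inf {x : F x ≥ p}`. -/
noncomputable def qtl (F : ℝ → ℝ) (p : ℝ) : ℝ := sInf {x | p ≤ F x}

/-- The Rockafellar–Uryasev objective `m_F(z) = (1 − p) z + ∫_z^∞ (1 − F(x)) dx`. -/
noncomputable def ruObj (p : ℝ) (μ : Measure ℝ) (z : ℝ) : ℝ :=
  (1 - p) * z + ∫ x in Ioi z, (1 - cdfOf μ x)

open scoped ENNReal
open Topology

section Aux
variable (μ : Measure ℝ) [IsProbabilityMeasure μ]

lemma cdfOf_eq_cdf : cdfOf μ = ⇑(cdf μ) := funext fun x => (cdf_eq_real μ x).symm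

lemma cdfOf_mono : Monotone (cdfOf μ) := by rw [cdfOf_eq_cdf]; exact monotone_cdf μ

lemma cdfOf_nonneg (x : ℝ) : 0 ≤ cdfOf μ x := by rw [cdfOf_eq_cdf]; exact cdf_nonneg μ x

lemma cdfOf_le_one (x : ℝ) : cdfOf μ x ≤ 1 := by rw [cdfOf_eq_cdf]; exact cdf_le_one μ x

lemma ofReal_one_sub_cdfOf (x : ℝ) : ENNReal.ofReal (1 - cdfOf μ x) = μ (Ioi x) := by
  have h1 : μ (Ioi x) = 1 - μ (Iic x) := by
    rw [← compl_Iic, measure_compl measurableSet_Iic (measure_ne_top μ _), measure_univ]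
  have h2 : (μ (Ioi x)).toReal = 1 - cdfOf μ x := by
    rw [h1, ENNReal.toReal_sub_of_le prob_le_one ENNReal.one_ne_top, ENNReal.toReal_one]; rfl
  rw [← h2, ENNReal.ofReal_toReal (measure_ne_top μ _)]

lemma lintegral_Ioi_translate (g : ℝ → ℝ≥0∞) (hg : Measurable g) (z : ℝ) :
    ∫⁻ x in Ioi z, g x = ∫⁻ t in Ioi 0, g (z + t) := by
  have hpre : (fun t : ℝ => z + t) ⁻¹' Ioi z = Ioi 0 := by ext t; simp
  have h1 : volume.restrict (Ioi z)
      = (volume.restrict (Ioi (0:ℝ))).map (fun t => z + t) := by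
    rw [← hpre, ← Measure.restrict_map (measurable_const_add z) measurableSet_Ioi,
      map_add_left_eq_self volume z]
  rw [h1, lintegral_map hg (measurable_const_add z)]

omit [IsProbabilityMeasure μ] in
lemma measurable_meas_Ioi : Measurable (fun x => μ (Ioi x)) :=
  Antitone.measurable fun _ _ hab => measure_mono (Ioi_subset_Ioi hab)

lemma lint_tail (z : ℝ) :
    ∫⁻ x in Ioi z, ENNReal.ofReal (1 - cdfOf μ x)
      = ∫⁻ x, ENNReal.ofReal (max (x - z) 0) ∂μ := by
  have hlc := lintegral_eq_lintegral_meas_lt μ (f := fun x => max (x - z) 0)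
    (Eventually.of_forall fun x => le_max_right _ _)
    (((measurable_id.sub measurable_const).max measurable_const).aemeasurable)
  calc ∫⁻ x in Ioi z, ENNReal.ofReal (1 - cdfOf μ x)
      = ∫⁻ x in Ioi z, μ (Ioi x) := by
        simp_rw [ofReal_one_sub_cdfOf μ]
    _ = ∫⁻ t in Ioi 0, μ (Ioi (z + t)) := lintegral_Ioi_translate _ (measurable_meas_Ioi μ) z
    _ = ∫⁻ t in Ioi 0, μ {a | t < max (a - z) 0} := by
        refine setLIntegral_congr_fun measurableSet_Ioi (fun t ht => ?_)
        congr 1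
        ext a
        simp only [mem_Ioi, mem_setOf_eq, lt_max_iff]
        constructor
        · intro h; left; linarith
        · rintro (h | h)
          · linarith
          · exact absurd (mem_Ioi.1 ht) (by linarith)
    _ = _ := hlc.symm

lemma lint_tail_lt_top (hμ : Integrable (fun x => max x 0) μ) (z : ℝ) :
    ∫⁻ x in Ioi z, ENNReal.ofReal (1 - cdfOf μ x) < ∞ := by
  rw [lint_tail μ z]
  calc ∫⁻ x, ENNReal.ofReal (max (x - z) 0) ∂μ
      ≤ ∫⁻ x, (ENNReal.ofReal (max x 0) + ENNReal.ofReal |z|) ∂μ := by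
        refine lintegral_mono fun x => ?_
        rw [← ENNReal.ofReal_add (le_max_right _ _) (abs_nonneg z)]
        refine ENNReal.ofReal_le_ofReal ?_
        refine max_le ?_ (by positivity)
        have h1 := le_max_left x 0
        have h2 := neg_abs_le z
        linarith
    _ = ∫⁻ x, ENNReal.ofReal (max x 0) ∂μ + ENNReal.ofReal |z| := by
        rw [lintegral_add_right _ measurable_const, lintegral_const, measure_univ, mul_one]
    _ < ∞ := ENNReal.add_lt_top.mpr ⟨hμ.lintegral_lt_top, ENNReal.ofReal_lt_top⟩

lemma integrableOn_tail (hμ : Integrable (fun x => max x 0) μ) (z : ℝ) :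
    IntegrableOn (fun x => 1 - cdfOf μ x) (Ioi z) volume := by
  refine ⟨(measurable_const.sub (cdfOf_mono μ).measurable).aestronglyMeasurable, ?_⟩
  rw [hasFiniteIntegral_iff_ofReal
    (Eventually.of_forall fun x => sub_nonneg.2 (cdfOf_le_one μ x))]
  exact lint_tail_lt_top μ hμ z

lemma integral_tail_eq (z : ℝ) :
    ∫ x in Ioi z, (1 - cdfOf μ x)
      = (∫⁻ x in Ioi z, ENNReal.ofReal (1 - cdfOf μ x)).toReal :=
  integral_eq_lintegral_of_nonneg_ae
    (Eventually.of_forall fun x => sub_nonneg.2 (cdfOf_le_one μ x))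
    (measurable_const.sub (cdfOf_mono μ).measurable).aestronglyMeasurable

lemma bddBelow_qtlSet {u : ℝ} (hu0 : 0 < u) : BddBelow {x | u ≤ cdfOf μ x} := by
  have htb : Tendsto (cdfOf μ) atBot (𝓝 0) := by
    rw [cdfOf_eq_cdf]; exact tendsto_cdf_atBot μ
  obtain ⟨x0, hx0⟩ := (htb.eventually_lt_const hu0).exists
  refine ⟨x0, fun x hx => ?_⟩
  by_contra h
  push_neg at h
  exact absurd (le_trans hx (cdfOf_mono μ h.le)) (not_le.2 hx0)

lemma nonempty_qtlSet {u : ℝ} (hu1 : u < 1) : {x | u ≤ cdfOf μ x}.Nonempty := by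
  have htt : Tendsto (cdfOf μ) atTop (𝓝 1) := by
    rw [cdfOf_eq_cdf]; exact tendsto_cdf_atTop μ
  exact (htt.eventually_const_le hu1).exists

lemma qtl_spec {u : ℝ} (hu0 : 0 < u) (hu1 : u < 1) :
    u ≤ cdfOf μ (qtl (cdfOf μ) u) := by
  set S := {x | u ≤ cdfOf μ x} with hS
  have hne := nonempty_qtlSet μ hu1
  have hbdd := bddBelow_qtlSet μ hu0
  set q := sInf S with hqdef
  by_contra hlt
  push_neg at hlt
  have hc : ContinuousWithinAt (cdfOf μ) (Ici q) q := by
    rw [cdfOf_eq_cdf]; exact (cdf μ).right_continuous q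
  have hev : (cdfOf μ) ⁻¹' (Iio u) ∈ 𝓝[Ici q] q := hc (Iio_mem_nhds hlt)
  rw [mem_nhdsWithin] at hev
  obtain ⟨V, hVopen, hqV, hVsub⟩ := hev
  obtain ⟨δ, hδpos, hball⟩ := Metric.isOpen_iff.1 hVopen q hqV
  obtain ⟨a, haS, halt⟩ := Real.lt_sInf_add_pos hne hδpos
  have hqa : q ≤ a := csInf_le hbdd haS
  have haV : a ∈ V := hball (by
    simp only [Metric.mem_ball, Real.dist_eq, abs_of_nonneg (sub_nonneg.2 hqa)]
    linarith)
  have : cdfOf μ a < u := hVsub ⟨haV, hqa⟩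
  exact absurd haS (by simpa using not_le.2 this)

lemma qtl_le_iff {u s : ℝ} (hu0 : 0 < u) (hu1 : u < 1) :
    qtl (cdfOf μ) u ≤ s ↔ u ≤ cdfOf μ s :=
  ⟨fun h => le_trans (qtl_spec μ hu0 hu1) (cdfOf_mono μ h),
   fun h => csInf_le (bddBelow_qtlSet μ hu0) h⟩

lemma qtl_mono {u v : ℝ} (hu0 : 0 < u) (hv1 : v < 1) (huv : u ≤ v) :
    qtl (cdfOf μ) u ≤ qtl (cdfOf μ) v :=
  csInf_le_csInf (bddBelow_qtlSet μ hu0) (nonempty_qtlSet μ hv1)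
    (fun x hx => le_trans huv hx)

end Aux


/-- Rockafellar–Uryasev representation of Expected Shortfall:
for `p ∈ (0,1)` and `F ∈ F₁⁺`, with `m_F(z) = (1 − p) z + ∫_z^∞ (1 − F(x)) dx`,
one has `∫_p^1 F⁻¹(u) du = min_{y ∈ ℝ} m_F(y)`, the minimum being attained at
`y = F⁻¹(p)`. -/
theorem stmt9 (μ : Measure ℝ) [IsProbabilityMeasure μ]
    (hμ : Integrable (fun x => max x 0) μ)
    (p : ℝ) (hp : p ∈ Ioo (0 : ℝ) 1) :
    (∫ u in p..1, qtl (cdfOf μ) u) = ruObj p μ (qtl (cdfOf μ) p) ∧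
      ∀ y : ℝ, ruObj p μ (qtl (cdfOf μ) p) ≤ ruObj p μ y := by
  obtain ⟨hp0, hp1⟩ := hp
  set q := qtl (cdfOf μ) p with hqdef
  have hqmem : p ≤ cdfOf μ q := qtl_spec μ hp0 hp1
  constructor
  · -- the representation
    have hnn : ∀ᵐ u ∂(volume.restrict (Ioo p 1)), 0 ≤ qtl (cdfOf μ) u - q := by
      refine (ae_restrict_mem measurableSet_Ioo).mono fun u hu => ?_
      exact sub_nonneg.2 (qtl_mono μ hp0 hu.2 hu.1.le)
    have hmble : AEMeasurable (fun u => qtl (cdfOf μ) u - q) (volume.restrict (Ioo p 1)) := by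
      refine AEMeasurable.sub ?_ aemeasurable_const
      refine aemeasurable_restrict_of_monotoneOn measurableSet_Ioo ?_
      intro u hu v hv huv
      exact qtl_mono μ (hp0.trans hu.1) hv.2 huv
    have hA := lintegral_eq_lintegral_meas_lt (volume.restrict (Ioo p 1))
      (f := fun u => qtl (cdfOf μ) u - q) hnn hmble
    have hsets : ∀ t ∈ Ioi (0:ℝ),
        (volume.restrict (Ioo p 1)) {u | t < qtl (cdfOf μ) u - q}
          = μ (Ioi (q + t)) := by
      intro t ht
      rw [mem_Ioi] at ht
      rw [Measure.restrict_apply' measurableSet_Ioo]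
      have hFq : p ≤ cdfOf μ (q + t) := le_trans hqmem (cdfOf_mono μ (by linarith))
      have hset : {u | t < qtl (cdfOf μ) u - q} ∩ Ioo p 1 = Ioo (cdfOf μ (q + t)) 1 := by
        ext u
        simp only [mem_inter_iff, mem_setOf_eq, mem_Ioo]
        constructor
        · rintro ⟨h1, h2, h3⟩
          refine ⟨?_, h3⟩
          by_contra hcon
          push_neg at hcon
          have := (qtl_le_iff μ (hp0.trans h2) h3).2 hcon
          linarith
        · rintro ⟨h1, h2⟩
          have hu0 : 0 < u := lt_of_le_of_lt (cdfOf_nonneg μ _) h1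
          have hup : p < u := lt_of_le_of_lt hFq h1
          refine ⟨?_, hup, h2⟩
          have h4 : ¬ qtl (cdfOf μ) u ≤ q + t := fun hcon =>
            absurd ((qtl_le_iff μ hu0 h2).1 hcon) (not_le.2 h1)
          push_neg at h4
          linarith
      rw [hset, Real.volume_Ioo, ofReal_one_sub_cdfOf μ]
    have hA2 : ∫⁻ u in Ioo p 1, ENNReal.ofReal (qtl (cdfOf μ) u - q)
        = ∫⁻ x in Ioi q, ENNReal.ofReal (1 - cdfOf μ x) := by
      rw [hA]
      calc ∫⁻ t in Ioi 0, (volume.restrict (Ioo p 1)) {u | t < qtl (cdfOf μ) u - q}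
          = ∫⁻ t in Ioi 0, μ (Ioi (q + t)) :=
            setLIntegral_congr_fun measurableSet_Ioi
              (fun t ht => hsets t ht)
        _ = ∫⁻ x in Ioi q, μ (Ioi x) :=
            (lintegral_Ioi_translate _ (measurable_meas_Ioi μ) q).symm
        _ = ∫⁻ x in Ioi q, ENNReal.ofReal (1 - cdfOf μ x) := by
            simp_rw [ofReal_one_sub_cdfOf μ]
    have hCfin := lint_tail_lt_top μ hμ q
    have hAfin : ∫⁻ u in Ioo p 1, ENNReal.ofReal (qtl (cdfOf μ) u - q) < ∞ := by
      rw [hA2]; exact hCfin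
    have hInt1 : Integrable (fun u => qtl (cdfOf μ) u - q) (volume.restrict (Ioo p 1)) :=
      ⟨hmble.aestronglyMeasurable, (hasFiniteIntegral_iff_ofReal hnn).2 hAfin⟩
    have h1 : ∫ u in Ioo p 1, (qtl (cdfOf μ) u - q)
        = (∫⁻ u in Ioo p 1, ENNReal.ofReal (qtl (cdfOf μ) u - q)).toReal :=
      integral_eq_lintegral_of_nonneg_ae hnn hmble.aestronglyMeasurable
    have hIqtl : ∫ u in Ioo p 1, qtl (cdfOf μ) u
        = (∫⁻ u in Ioo p 1, ENNReal.ofReal (qtl (cdfOf μ) u - q)).toReal + (1 - p) * q := by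
      have h2 : ∫ u in Ioo p 1, qtl (cdfOf μ) u
          = ∫ u in Ioo p 1, ((qtl (cdfOf μ) u - q) + q) := by
        congr 1; funext u; ring
      rw [h2, integral_add hInt1 (integrableOn_const (by
        rw [Real.volume_Ioo]; exact ENNReal.ofReal_ne_top)), h1, integral_const]
      rw [measureReal_restrict_apply_univ, Real.volume_real_Ioo_of_le (by linarith),
        smul_eq_mul]
    rw [intervalIntegral.integral_of_le hp1.le,
      ← Measure.restrict_congr_set Ioo_ae_eq_Ioc, hIqtl]
    rw [ruObj, integral_tail_eq μ q, ← hA2]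
    ring
  · -- minimality
    intro y
    have hq1 : p ≤ cdfOf μ q := hqmem
    rcases le_total y q with hyq | hqy
    · -- y ≤ q
      have hdisj : Disjoint (Ioc y q) (Ioi q) := by
        rw [disjoint_left]
        intro x hx hx'
        exact absurd hx.2 (not_le.2 hx')
      have hsplit : ∫ x in Ioi y, (1 - cdfOf μ x)
          = (∫ x in Ioc y q, (1 - cdfOf μ x)) + ∫ x in Ioi q, (1 - cdfOf μ x) := by
        rw [← setIntegral_union hdisj measurableSet_Ioi
          ((integrableOn_tail μ hμ y).mono_set Ioc_subset_Ioi_self)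
          (integrableOn_tail μ hμ q), Ioc_union_Ioi_eq_Ioi hyq]
      have key : (1 - p) * (q - y) ≤ ∫ x in Ioc y q, (1 - cdfOf μ x) := by
        have hoo : ∫ x in Ioc y q, (1 - cdfOf μ x) = ∫ x in Ioo y q, (1 - cdfOf μ x) := by
          rw [← Measure.restrict_congr_set Ioo_ae_eq_Ioc]
        have hconst : (1 - p) * (q - y) = ∫ _x in Ioo y q, (1 - p) := by
          rw [integral_const, measureReal_restrict_apply_univ, Real.volume_real_Ioo_of_le (by linarith),
            smul_eq_mul]
          ring
        rw [hoo, hconst]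
        refine setIntegral_mono_on (integrableOn_const (by
            rw [Real.volume_Ioo]; exact ENNReal.ofReal_ne_top))
          ((integrableOn_tail μ hμ y).mono_set Ioo_subset_Ioi_self)
          measurableSet_Ioo (fun x hx => ?_)
        have hxq : ¬ p ≤ cdfOf μ x := fun hcon =>
          absurd (csInf_le (bddBelow_qtlSet μ hp0) hcon) (not_le.2 hx.2)
        push_neg at hxq
        linarith
      simp only [ruObj]
      rw [hsplit]
      nlinarith [key]
    · -- q ≤ y
      have hdisj : Disjoint (Ioc q y) (Ioi y) := by
        rw [disjoint_left]
        intro x hx hx'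
        exact absurd hx.2 (not_le.2 hx')
      have hsplit : ∫ x in Ioi q, (1 - cdfOf μ x)
          = (∫ x in Ioc q y, (1 - cdfOf μ x)) + ∫ x in Ioi y, (1 - cdfOf μ x) := by
        rw [← setIntegral_union hdisj measurableSet_Ioi
          ((integrableOn_tail μ hμ q).mono_set Ioc_subset_Ioi_self)
          (integrableOn_tail μ hμ y), Ioc_union_Ioi_eq_Ioi hqy]
      have key : ∫ x in Ioc q y, (1 - cdfOf μ x) ≤ (1 - p) * (y - q) := by
        have hconst : (1 - p) * (y - q) = ∫ _x in Ioc q y, (1 - p) := by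
          rw [integral_const, measureReal_restrict_apply_univ, Real.volume_real_Ioc_of_le (by linarith),
            smul_eq_mul]
          ring
        rw [hconst]
        refine setIntegral_mono_on
          ((integrableOn_tail μ hμ q).mono_set Ioc_subset_Ioi_self)
          (integrableOn_const (by
            rw [Real.volume_Ioc]; exact ENNReal.ofReal_ne_top))
          measurableSet_Ioc (fun x hx => ?_)
        have : p ≤ cdfOf μ x := le_trans hq1 (cdfOf_mono μ hx.1.le)
        linarith
      simp only [ruObj]
      rw [hsplit]
      nlinarith [key]
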